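/- Let Λ₀ be a diagonal complex n×n matrix and A₁ a complex n×n matrix. Suppose (a) (A₁)_{ij} = 0 whenever (Λ₀)_{ii} = (Λ₀)_{jj} and i ≠ j is in the same coalescence block (i.e. A₁^{nd} ∈ im ad(Λ₀)), and (b) for all i, j with (Λ₀)_{ii} = (Λ₀)_{jj}, the difference (A₁)_{ii} − (A₁)_{jj} is not a nonzero integer. Then there exists a formal power series F(z) = I + z P₁ + z² P₂ + ⋯ with matrix coefficients such that the formal gauge transformation by F takes the connection matrix (Λ₀/z + A₁) dz/z to the diagonal matrix (Λ₀/z + A₁^{diag}) dz/z, where A₁^{diag} is the diagonal part of A₁. The gauge transformation relation is: z²(dF/dz) = (Λ₀ + z A₁) F − F (Λ₀ + z A₁^{diag}). -/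

import Mathlib

/- STATEMENT 9: Formal diagonalization of (Λ₀/z + A₁) dz/z.  Under (a) the off-diagonal
entries of A₁ vanish within each group of equal eigenvalues of the diagonal matrix Λ₀
(A₁^{nd} ∈ im ad(Λ₀)) and (b) partial non-resonance ((A₁)_{ii} − (A₁)_{jj} is not a
nonzero integer whenever (Λ₀)_{ii} = (Λ₀)_{jj}), there exists a formal power series
F(z) = I + zP₁ + z²P₂ + ⋯ gauging (Λ₀/z + A₁) dz/z to (Λ₀/z + A₁^{diag}) dz/z.
The gauge relation z² dF/dz = (Λ₀ + zA₁)F − F(Λ₀ + zA₁^{diag}) is written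
coefficientwise: k·P_k = Λ₀P_{k+1} − P_{k+1}Λ₀ + A₁P_k − P_k A₁^{diag}. -/

open Matrix Finset

noncomputable section Stmt9Aux

variable {n : ℕ}

/-- Off-block part of the next coefficient. -/
def q9 (d : Fin n → ℂ) (A₁ : Matrix (Fin n) (Fin n) ℂ) (k : ℕ)
    (P : Matrix (Fin n) (Fin n) ℂ) : Matrix (Fin n) (Fin n) ℂ :=
  Matrix.of fun i j =>
    if d i = d j then 0
    else ((k : ℂ) * P i j - (A₁ * P) i j + P i j * A₁ j j) / (d i - d j)

/-- Full next coefficient. -/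
def step9 (d : Fin n → ℂ) (A₁ : Matrix (Fin n) (Fin n) ℂ) (k : ℕ)
    (P : Matrix (Fin n) (Fin n) ℂ) : Matrix (Fin n) (Fin n) ℂ :=
  Matrix.of fun i j =>
    if d i = d j then
      (∑ l, if d l = d i then 0 else A₁ i l * q9 d A₁ k P l j) /
        ((k : ℂ) + 1 - A₁ i i + A₁ j j)
    else q9 d A₁ k P i j

def pseq9 (d : Fin n → ℂ) (A₁ : Matrix (Fin n) (Fin n) ℂ) : ℕ → Matrix (Fin n) (Fin n) ℂ
  | 0 => 1
  | k + 1 => step9 d A₁ k (pseq9 d A₁ k)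

lemma hblock9 {n : ℕ} (d : Fin n → ℂ) (A₁ : Matrix (Fin n) (Fin n) ℂ)
    (ha : ∀ i j, i ≠ j → d i = d j → A₁ i j = 0)
    (hb : ∀ i j, d i = d j → ∀ k : ℤ, k ≠ 0 → A₁ i i - A₁ j j ≠ (k : ℂ)) :
    ∀ k : ℕ, ∀ i j, d i = d j →
      (k : ℂ) * pseq9 d A₁ k i j
        = (A₁ * pseq9 d A₁ k) i j - pseq9 d A₁ k i j * A₁ j j := by
  intro k
  induction k with
  | zero =>
    intro i j hd
    simp only [pseq9, Nat.cast_zero, zero_mul, Matrix.mul_one, Matrix.one_apply]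
    by_cases h : i = j
    · subst h; simp
    · rw [ha i j h hd]; simp [h]
  | succ k ih =>
    intro i j hd
    have hden : ((k : ℂ) + 1 - A₁ i i + A₁ j j) ≠ 0 := by
      intro h
      have : A₁ i i - A₁ j j = ((k : ℤ) + 1 : ℤ) := by push_cast; linear_combination -h
      exact hb i j hd ((k : ℤ) + 1) (by omega) this
    set P := pseq9 d A₁ k with hP
    have hstep : pseq9 d A₁ (k + 1) = step9 d A₁ k P := rfl
    set S := (∑ l, if d l = d j then 0 else A₁ i l * q9 d A₁ k P l j) with hS
    have hXij : pseq9 d A₁ (k + 1) i j = S / ((k : ℂ) + 1 - A₁ i i + A₁ j j) := by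
      rw [hstep]; simp [step9, hd]; rfl
    have hmul : (A₁ * pseq9 d A₁ (k + 1)) i j
        = S + A₁ i i * pseq9 d A₁ (k + 1) i j := by
      rw [Matrix.mul_apply]
      have key : ∀ l, A₁ i l * pseq9 d A₁ (k + 1) l j
          = (if d l = d j then 0 else A₁ i l * q9 d A₁ k P l j)
            + (if l = i then A₁ i i * pseq9 d A₁ (k + 1) i j else 0) := by
        intro l
        by_cases h1 : d l = d j
        · by_cases h2 : l = i
          · subst h2; simp [h1]
          · rw [ha i l (fun h => h2 h.symm) (hd.trans h1.symm)]
            simp [h1, h2]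
        · have h2 : l ≠ i := fun h => h1 (by rw [h, hd])
          rw [hstep]
          simp [step9, h1, h2]
      rw [Finset.sum_congr rfl fun l _ => key l, Finset.sum_add_distrib,
        Finset.sum_ite_eq' Finset.univ i
          (fun _ => A₁ i i * pseq9 d A₁ (k + 1) i j)]
      simp [hS]
    rw [hmul, hXij]
    push_cast
    field_simp
    ring
end Stmt9Aux

theorem stmt9 {n : ℕ} (d : Fin n → ℂ) (A₁ : Matrix (Fin n) (Fin n) ℂ)
    (ha : ∀ i j, i ≠ j → d i = d j → A₁ i j = 0)
    (hb : ∀ i j, d i = d j → ∀ k : ℤ, k ≠ 0 → A₁ i i - A₁ j j ≠ (k : ℂ)) :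
    ∃ P : ℕ → Matrix (Fin n) (Fin n) ℂ, P 0 = 1 ∧
      ∀ k : ℕ, (k : ℂ) • P k =
        Matrix.diagonal d * P (k + 1) - P (k + 1) * Matrix.diagonal d
          + A₁ * P k - P k * Matrix.diagonal (fun i => A₁ i i) := by
  refine ⟨pseq9 d A₁, rfl, fun k => ?_⟩
  ext i j
  simp only [Matrix.smul_apply, Matrix.sub_apply, Matrix.add_apply,
    Matrix.diagonal_mul, Matrix.mul_diagonal, smul_eq_mul]
  by_cases hd : d i = d j
  · rw [hd]
    linear_combination hblock9 d A₁ ha hb k i j hd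
  · have hstep : pseq9 d A₁ (k + 1) = step9 d A₁ k (pseq9 d A₁ k) := rfl
    rw [hstep]
    simp only [step9, q9, Matrix.of_apply, hd, if_false]
    have hne : d i - d j ≠ 0 := sub_ne_zero.mpr hd
    field_simp
    ring
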